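/- arXiv:2303.14013 — 5 statements merged into one kernel-verified Lean document; each statement's English description precedes it below -/
import Mathlib

section
/- Let S ∈ ℂ[x] be a monic squarefree polynomial of odd degree 2g+1 with g ≥ 1, let κ ∈ ℂ with κ ≠ 0 and κ ≠ 1, and let F, G ∈ ℂ(x) with F nonconstant satisfy S·G² = F·(F−1)·(F−κ). Then the rational function F′/G (where F′ is the derivative of F) is a polynomial, and its degree is at most g−1. -/
open Polynomial

/-- The formal derivative of a rational function, computed from its reduced
numerator/denominator representation by the quotient rule. -/
noncomputable def RatFunc.deriv' (F : RatFunc ℂ) : RatFunc ℂ :=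
  RatFunc.mk (Polynomial.derivative F.num * F.denom - F.num * Polynomial.derivative F.denom)
    (F.denom ^ 2)

namespace EllAux

/-- Order of vanishing of a rational function at a point `α`. -/
noncomputable def vv (α : ℂ) (f : RatFunc ℂ) : ℤ :=
  (rootMultiplicity α f.num : ℤ) - (rootMultiplicity α f.denom : ℤ)

lemma base (f : RatFunc ℂ) :
    f * algebraMap ℂ[X] (RatFunc ℂ) f.denom = algebraMap ℂ[X] (RatFunc ℂ) f.num := by
  exact ((div_eq_iff (RatFunc.algebraMap_ne_zero f.denom_ne_zero)).mp
    (RatFunc.num_div_denom f)).symm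

lemma rm_neg (α : ℂ) (p : ℂ[X]) : rootMultiplicity α (-p) = rootMultiplicity α p := by
  by_cases hp : p = 0
  · simp [hp]
  · rw [← neg_one_mul, show ((-1 : ℂ[X])) = Polynomial.C (-1) by simp,
      Polynomial.rootMultiplicity_mul (by simp [hp] : Polynomial.C (-1) * p ≠ 0),
      Polynomial.rootMultiplicity_C, zero_add]

lemma coprime_rm (f : RatFunc ℂ) (α : ℂ) :
    rootMultiplicity α f.num = 0 ∨ rootMultiplicity α f.denom = 0 := by
  by_contra hcon
  push_neg at hcon
  obtain ⟨h1, h2⟩ := hcon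
  have hn : f.num.IsRoot α := (Polynomial.rootMultiplicity_pos'.mp (Nat.pos_of_ne_zero h1)).2
  have hd : f.denom.IsRoot α := (Polynomial.rootMultiplicity_pos'.mp (Nat.pos_of_ne_zero h2)).2
  obtain ⟨a, b, hab⟩ := f.isCoprime_num_denom
  have := congrArg (Polynomial.eval α) hab
  simp only [Polynomial.eval_add, Polynomial.eval_mul, Polynomial.eval_one,
    hn.eq_zero, hd.eq_zero, mul_zero, add_zero] at this
  exact one_ne_zero this.symm

lemma vv_eq (α : ℂ) {f : RatFunc ℂ} {p q : ℂ[X]} (hf : f ≠ 0) (hq : q ≠ 0)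
    (h : f = algebraMap ℂ[X] (RatFunc ℂ) p / algebraMap ℂ[X] (RatFunc ℂ) q) :
    vv α f = (rootMultiplicity α p : ℤ) - (rootMultiplicity α q : ℤ) := by
  have hp : p ≠ 0 := by rintro rfl; rw [map_zero, zero_div] at h; exact hf h
  have key := (RatFunc.num_mul_eq_mul_denom_iff hq).mpr h
  have h1 : rootMultiplicity α (f.num * q)
      = rootMultiplicity α f.num + rootMultiplicity α q :=
    Polynomial.rootMultiplicity_mul (mul_ne_zero (RatFunc.num_ne_zero hf) hq)
  have h2 : rootMultiplicity α (p * f.denom)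
      = rootMultiplicity α p + rootMultiplicity α f.denom :=
    Polynomial.rootMultiplicity_mul (mul_ne_zero hp f.denom_ne_zero)
  rw [key, h2] at h1
  unfold vv
  omega

lemma vv_algebraMap (α : ℂ) {p : ℂ[X]} (hp : p ≠ 0) :
    vv α (algebraMap ℂ[X] (RatFunc ℂ) p) = rootMultiplicity α p := by
  have h1 : rootMultiplicity α (1 : ℂ[X]) = 0 := by
    rw [← Polynomial.C_1, Polynomial.rootMultiplicity_C]
  unfold vv
  rw [RatFunc.num_algebraMap, RatFunc.denom_algebraMap, h1]
  omega

lemma vv_mul (α : ℂ) {f g : RatFunc ℂ} (hf : f ≠ 0) (hg : g ≠ 0) :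
    vv α (f * g) = vv α f + vv α g := by
  have hrep : f * g = algebraMap ℂ[X] (RatFunc ℂ) (f.num * g.num) /
      algebraMap ℂ[X] (RatFunc ℂ) (f.denom * g.denom) := by
    rw [eq_div_iff (RatFunc.algebraMap_ne_zero (mul_ne_zero f.denom_ne_zero g.denom_ne_zero)),
      map_mul, map_mul]
    linear_combination (g * algebraMap ℂ[X] (RatFunc ℂ) g.denom) * base f +
      algebraMap ℂ[X] (RatFunc ℂ) f.num * base g
  rw [vv_eq α (mul_ne_zero hf hg) (mul_ne_zero f.denom_ne_zero g.denom_ne_zero) hrep,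
    Polynomial.rootMultiplicity_mul
      (mul_ne_zero (RatFunc.num_ne_zero hf) (RatFunc.num_ne_zero hg)),
    Polynomial.rootMultiplicity_mul (mul_ne_zero f.denom_ne_zero g.denom_ne_zero)]
  unfold vv
  omega

lemma vv_div (α : ℂ) {f g : RatFunc ℂ} (hf : f ≠ 0) (hg : g ≠ 0) :
    vv α (f / g) = vv α f - vv α g := by
  have h1 : f / g ≠ 0 := div_ne_zero hf hg
  have h2 := vv_mul α h1 hg
  rw [div_mul_cancel₀ _ hg] at h2
  omega

lemma vv_neg (α : ℂ) {f : RatFunc ℂ} (hf : f ≠ 0) : vv α (-f) = vv α f := by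
  have hrep : -f = algebraMap ℂ[X] (RatFunc ℂ) (-f.num) /
      algebraMap ℂ[X] (RatFunc ℂ) f.denom := by
    rw [eq_div_iff (RatFunc.algebraMap_ne_zero f.denom_ne_zero), map_neg]
    linear_combination -base f
  rw [vv_eq α (neg_ne_zero.mpr hf) f.denom_ne_zero hrep, rm_neg]
  unfold vv
  omega

lemma vv_add (α : ℂ) {f g : RatFunc ℂ} (hf : f ≠ 0) (hg : g ≠ 0) (hfg : f + g ≠ 0) :
    min (vv α f) (vv α g) ≤ vv α (f + g) := by
  have h1 : algebraMap ℂ[X] (RatFunc ℂ) f.denom ≠ 0 :=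
    RatFunc.algebraMap_ne_zero f.denom_ne_zero
  have h2 : algebraMap ℂ[X] (RatFunc ℂ) g.denom ≠ 0 :=
    RatFunc.algebraMap_ne_zero g.denom_ne_zero
  have hrep : f + g = algebraMap ℂ[X] (RatFunc ℂ) (f.num * g.denom + f.denom * g.num) /
      algebraMap ℂ[X] (RatFunc ℂ) (f.denom * g.denom) := by
    rw [eq_div_iff (RatFunc.algebraMap_ne_zero (mul_ne_zero f.denom_ne_zero g.denom_ne_zero)),
      map_add, map_mul, map_mul, map_mul]
    linear_combination algebraMap ℂ[X] (RatFunc ℂ) g.denom * base f +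
      algebraMap ℂ[X] (RatFunc ℂ) f.denom * base g
  have hnum_ne : f.num * g.denom + f.denom * g.num ≠ 0 := by
    intro h0
    apply hfg
    rw [hrep, h0, map_zero, zero_div]
  rw [vv_eq α hfg (mul_ne_zero f.denom_ne_zero g.denom_ne_zero) hrep]
  have hmin := Polynomial.rootMultiplicity_add (p := f.num * g.denom)
    (q := f.denom * g.num) α hnum_ne
  rw [Polynomial.rootMultiplicity_mul (mul_ne_zero (RatFunc.num_ne_zero hf) g.denom_ne_zero),
    Polynomial.rootMultiplicity_mul
      (mul_ne_zero f.denom_ne_zero (RatFunc.num_ne_zero hg))] at hmin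
  have hden := Polynomial.rootMultiplicity_mul (x := α)
    (mul_ne_zero f.denom_ne_zero g.denom_ne_zero)
  rw [hden]
  unfold vv
  omega

lemma deriv'_eq_mk_self (f : RatFunc ℂ) :
    RatFunc.deriv' f = algebraMap ℂ[X] (RatFunc ℂ)
        (derivative f.num * f.denom - f.num * derivative f.denom) /
      algebraMap ℂ[X] (RatFunc ℂ) (f.denom ^ 2) := by
  simp only [RatFunc.deriv']
  exact RatFunc.mk_eq_div _ _

lemma deriv'_rep (f : RatFunc ℂ) {p q : ℂ[X]} (hq : q ≠ 0)
    (h : f = algebraMap ℂ[X] (RatFunc ℂ) p / algebraMap ℂ[X] (RatFunc ℂ) q) :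
    RatFunc.deriv' f = algebraMap ℂ[X] (RatFunc ℂ) (derivative p * q - p * derivative q) /
      algebraMap ℂ[X] (RatFunc ℂ) (q ^ 2) := by
  obtain ⟨r, hr⟩ := (RatFunc.denom_dvd hq).mpr ⟨p, h⟩
  have hr0 : r ≠ 0 := by rintro rfl; rw [mul_zero] at hr; exact hq hr
  have hp : p = f.num * r := by
    have key := (RatFunc.num_mul_eq_mul_denom_iff hq).mpr h
    rw [hr] at key
    have : f.denom * p = f.denom * (f.num * r) := by linear_combination -key
    exact mul_left_cancel₀ f.denom_ne_zero this
  have hnum : derivative p * q - p * derivative q =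
      r ^ 2 * (derivative f.num * f.denom - f.num * derivative f.denom) := by
    rw [hp, hr]
    simp only [derivative_mul]
    ring
  have hden : q ^ 2 = r ^ 2 * f.denom ^ 2 := by rw [hr]; ring
  rw [hnum, hden, map_mul, map_mul,
    mul_div_mul_left _ _ (RatFunc.algebraMap_ne_zero (pow_ne_zero 2 hr0))]
  exact deriv'_eq_mk_self f

lemma deriv'_sub_C (f : RatFunc ℂ) (c : ℂ) :
    RatFunc.deriv' (f - RatFunc.C c) = RatFunc.deriv' f := by
  have h1 : algebraMap ℂ[X] (RatFunc ℂ) f.denom ≠ 0 :=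
    RatFunc.algebraMap_ne_zero f.denom_ne_zero
  have hrep : f - RatFunc.C c = algebraMap ℂ[X] (RatFunc ℂ)
        (f.num - Polynomial.C c * f.denom) / algebraMap ℂ[X] (RatFunc ℂ) f.denom := by
    rw [eq_div_iff h1, map_sub, map_mul, RatFunc.algebraMap_C]
    linear_combination base f
  rw [deriv'_rep (f - RatFunc.C c) f.denom_ne_zero hrep,
    deriv'_rep f f.denom_ne_zero (RatFunc.num_div_denom f).symm]
  refine congrArg (fun t => algebraMap ℂ[X] (RatFunc ℂ) t / algebraMap ℂ[X] (RatFunc ℂ) (f.denom ^ 2)) ?_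
  simp only [derivative_sub, derivative_mul, derivative_C]
  ring

lemma rm_aux (n d : ℂ[X]) (α : ℂ) (hA : derivative n * d - n * derivative d ≠ 0) :
    rootMultiplicity α n + rootMultiplicity α d ≤
      rootMultiplicity α (derivative n * d - n * derivative d) + 1 := by
  have hn : n ≠ 0 := by rintro rfl; simp at hA
  have hd : d ≠ 0 := by rintro rfl; simp at hA
  by_cases hn' : derivative n = 0
  · have hd' : derivative d ≠ 0 := by
      intro h0; rw [hn', h0] at hA; simp at hA
    have h1 : derivative n * d - n * derivative d = -(n * derivative d) := by rw [hn']; ring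
    rw [h1, rm_neg, Polynomial.rootMultiplicity_mul (mul_ne_zero hn hd')]
    have := Polynomial.rootMultiplicity_sub_one_le_derivative_rootMultiplicity_of_ne_zero d α hd'
    have hrm : rootMultiplicity α n = 0 := by
      obtain ⟨a, ha⟩ := Polynomial.natDegree_eq_zero.mp
        (Polynomial.natDegree_eq_zero_of_derivative_eq_zero hn')
      rw [← ha, Polynomial.rootMultiplicity_C]
    omega
  · by_cases hd' : derivative d = 0
    · have h1 : derivative n * d - n * derivative d = derivative n * d := by rw [hd']; ring
      rw [h1, Polynomial.rootMultiplicity_mul (mul_ne_zero hn' hd)]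
      have := Polynomial.rootMultiplicity_sub_one_le_derivative_rootMultiplicity_of_ne_zero n α hn'
      have hrm : rootMultiplicity α d = 0 := by
        obtain ⟨a, ha⟩ := Polynomial.natDegree_eq_zero.mp
          (Polynomial.natDegree_eq_zero_of_derivative_eq_zero hd')
        rw [← ha, Polynomial.rootMultiplicity_C]
      omega
    · have hb := Polynomial.rootMultiplicity_add (p := derivative n * d)
        (q := -(n * derivative d)) α (by rwa [← sub_eq_add_neg])
      rw [← sub_eq_add_neg, rm_neg,
        Polynomial.rootMultiplicity_mul (mul_ne_zero hn' hd),
        Polynomial.rootMultiplicity_mul (mul_ne_zero hn hd')] at hb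
      have e1 := Polynomial.rootMultiplicity_sub_one_le_derivative_rootMultiplicity_of_ne_zero n α hn'
      have e2 := Polynomial.rootMultiplicity_sub_one_le_derivative_rootMultiplicity_of_ne_zero d α hd'
      omega

lemma deriv'_num_ne_zero {f : RatFunc ℂ} (hd : RatFunc.deriv' f ≠ 0) :
    derivative f.num * f.denom - f.num * derivative f.denom ≠ 0 := by
  intro h0
  apply hd
  rw [deriv'_eq_mk_self, h0, map_zero, zero_div]

lemma vv_deriv'_ge (α : ℂ) {f : RatFunc ℂ} (hf : f ≠ 0) (hd : RatFunc.deriv' f ≠ 0) :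
    vv α f - 1 ≤ vv α (RatFunc.deriv' f) := by
  have hA := deriv'_num_ne_zero hd
  rw [vv_eq α hd (pow_ne_zero 2 f.denom_ne_zero) (deriv'_eq_mk_self f)]
  have h2 : rootMultiplicity α (f.denom ^ 2) = 2 * rootMultiplicity α f.denom := by
    rw [sq, Polynomial.rootMultiplicity_mul (mul_ne_zero f.denom_ne_zero f.denom_ne_zero)]
    ring
  have hkey := rm_aux f.num f.denom α hA
  rw [h2]
  unfold vv
  omega

lemma vv_deriv'_nonneg (α : ℂ) {f : RatFunc ℂ} (hf : f ≠ 0) (hd : RatFunc.deriv' f ≠ 0)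
    (h0 : 0 ≤ vv α f) : 0 ≤ vv α (RatFunc.deriv' f) := by
  have hA := deriv'_num_ne_zero hd
  have hden0 : rootMultiplicity α f.denom = 0 := by
    rcases coprime_rm f α with h | h
    · unfold vv at h0; omega
    · exact h
  rw [vv_eq α hd (pow_ne_zero 2 f.denom_ne_zero) (deriv'_eq_mk_self f)]
  have h2 : rootMultiplicity α (f.denom ^ 2) = 2 * rootMultiplicity α f.denom := by
    rw [sq, Polynomial.rootMultiplicity_mul (mul_ne_zero f.denom_ne_zero f.denom_ne_zero)]
    ring
  rw [h2, hden0]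
  omega

lemma eq_algebraMap_of_vv_nonneg {f : RatFunc ℂ} (hf : f ≠ 0) (h : ∀ α, 0 ≤ vv α f) :
    f = algebraMap ℂ[X] (RatFunc ℂ) f.num := by
  suffices hd : f.denom = 1 by
    conv_lhs => rw [← RatFunc.num_div_denom f]
    rw [hd, map_one, div_one]
  by_contra hne
  have hdeg : f.denom.natDegree ≠ 0 := fun h0 =>
    hne ((RatFunc.monic_denom f).natDegree_eq_zero.mp h0)
  have hdegpos : 0 < f.denom.degree :=
    Polynomial.natDegree_pos_iff_degree_pos.mp (Nat.pos_of_ne_zero hdeg)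
  obtain ⟨α, hα⟩ := Complex.exists_root hdegpos
  have h1 : 0 < rootMultiplicity α f.denom :=
    (Polynomial.rootMultiplicity_pos f.denom_ne_zero).mpr hα
  have h2 : rootMultiplicity α f.num = 0 := by
    rcases coprime_rm f α with h' | h'
    · exact h'
    · omega
  have := h α
  unfold vv at this
  omega

lemma vv_pair (α : ℂ) {x y : RatFunc ℂ} {c : ℂ} (hx : x ≠ 0) (hy : y ≠ 0) (hc : c ≠ 0)
    (h : x - y = RatFunc.C c) :
    min (vv α y) 0 ≤ vv α x ∧ min (vv α x) 0 ≤ vv α y ∧ min (vv α x) (vv α y) ≤ 0 := by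
  have hCc : RatFunc.C c ≠ 0 := by simpa using hc
  have hvC : vv α (RatFunc.C c) = 0 := by
    have h1 : rootMultiplicity α (1 : ℂ[X]) = 0 := by
      rw [← Polynomial.C_1, Polynomial.rootMultiplicity_C]
    unfold vv
    rw [RatFunc.num_C, RatFunc.denom_C, Polynomial.rootMultiplicity_C, h1]
    simp
  refine ⟨?_, ?_, ?_⟩
  · have hx' : x = y + RatFunc.C c := by rw [← h]; ring
    have hb := vv_add α hy hCc (hx' ▸ hx)
    rw [← hx', hvC] at hb
    exact hb
  · have hCc' : -RatFunc.C c ≠ 0 := neg_ne_zero.mpr hCc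
    have hy' : y = x + -RatFunc.C c := by rw [← h]; ring
    have hb := vv_add α hx hCc' (hy' ▸ hy)
    rw [← hy', vv_neg α hCc, hvC] at hb
    exact hb
  · have hC' : RatFunc.C c = x + -y := by rw [← h]; ring
    have hb := vv_add α hx (neg_ne_zero.mpr hy) (by rw [← hC']; exact hCc)
    rw [← hC', hvC, vv_neg α hy] at hb
    exact hb

lemma deg_pair {x y : RatFunc ℂ} {c : ℂ} (hx : x ≠ 0) (hy : y ≠ 0) (hc : c ≠ 0)
    (h : x - y = RatFunc.C c) :
    x.intDegree ≤ max y.intDegree 0 ∧ y.intDegree ≤ max x.intDegree 0 ∧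
      0 ≤ max x.intDegree y.intDegree := by
  have hCc : RatFunc.C c ≠ 0 := by simpa using hc
  refine ⟨?_, ?_, ?_⟩
  · have hx' : x = y + RatFunc.C c := by rw [← h]; ring
    have hb := RatFunc.intDegree_add_le hCc (hx' ▸ hx)
    rw [← hx', RatFunc.intDegree_C] at hb
    exact hb
  · have hCc' : -RatFunc.C c ≠ 0 := neg_ne_zero.mpr hCc
    have hy' : y = x + -RatFunc.C c := by rw [← h]; ring
    have hb := RatFunc.intDegree_add_le hCc' (hy' ▸ hy)
    rw [← hy', RatFunc.intDegree_neg, RatFunc.intDegree_C] at hb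
    exact hb
  · have hC' : RatFunc.C c = x + -y := by rw [← h]; ring
    have hb := RatFunc.intDegree_add_le (neg_ne_zero.mpr hy) (by rw [← hC']; exact hCc)
    rw [← hC', RatFunc.intDegree_C, RatFunc.intDegree_neg] at hb
    exact hb

lemma intDegree_div {f g : RatFunc ℂ} (hf : f ≠ 0) (hg : g ≠ 0) :
    (f / g).intDegree = f.intDegree - g.intDegree := by
  have h1 : f / g ≠ 0 := div_ne_zero hf hg
  have h2 := RatFunc.intDegree_mul h1 hg
  rw [div_mul_cancel₀ _ hg] at h2
  omega

lemma ndeg_aux (n d : ℂ[X]) (hA : derivative n * d - n * derivative d ≠ 0) :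
    (derivative n * d - n * derivative d).natDegree + 1 ≤ n.natDegree + d.natDegree := by
  have hn : n ≠ 0 := by rintro rfl; simp at hA
  have hd : d ≠ 0 := by rintro rfl; simp at hA
  have hdn : ∀ p : ℂ[X], derivative p ≠ 0 → (derivative p).natDegree + 1 ≤ p.natDegree := by
    intro p hp
    have h0 : p.natDegree ≠ 0 := by
      intro h0
      obtain ⟨a, ha⟩ := Polynomial.natDegree_eq_zero.mp h0
      exact hp (by rw [← ha, Polynomial.derivative_C])
    have := Polynomial.natDegree_derivative_lt h0
    omega
  by_cases hn' : derivative n = 0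
  · have hd' : derivative d ≠ 0 := by
      intro h0; rw [hn', h0] at hA; simp at hA
    have h1 : derivative n * d - n * derivative d = -(n * derivative d) := by rw [hn']; ring
    rw [h1, Polynomial.natDegree_neg]
    have := Polynomial.natDegree_mul_le (p := n) (q := derivative d)
    have := hdn d hd'
    omega
  · by_cases hd' : derivative d = 0
    · have h1 : derivative n * d - n * derivative d = derivative n * d := by rw [hd']; ring
      rw [h1]
      have := Polynomial.natDegree_mul_le (p := derivative n) (q := d)
      have := hdn n hn'
      omega
    · have hb := Polynomial.natDegree_sub_le (derivative n * d) (n * derivative d)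
      have h1 := Polynomial.natDegree_mul_le (p := derivative n) (q := d)
      have h2 := Polynomial.natDegree_mul_le (p := n) (q := derivative d)
      have := hdn n hn'
      have := hdn d hd'
      omega

lemma intDegree_deriv'_le {f : RatFunc ℂ} (hf : f ≠ 0) (hd : RatFunc.deriv' f ≠ 0) :
    (RatFunc.deriv' f).intDegree ≤ f.intDegree - 1 := by
  have hA := deriv'_num_ne_zero hd
  rw [deriv'_eq_mk_self]
  rw [intDegree_div (RatFunc.algebraMap_ne_zero hA)
    (RatFunc.algebraMap_ne_zero (pow_ne_zero 2 f.denom_ne_zero)),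
    RatFunc.intDegree_polynomial, RatFunc.intDegree_polynomial]
  have hnd := ndeg_aux f.num f.denom hA
  have hpow : (f.denom ^ 2).natDegree = 2 * f.denom.natDegree := by
    rw [Polynomial.natDegree_pow]
  rw [hpow]
  unfold RatFunc.intDegree
  omega

end EllAux

open EllAux

theorem stmt0 (g : ℕ) (hg : 1 ≤ g) (S : Polynomial ℂ) (hmonic : S.Monic)
    (hsf : Squarefree S) (hdeg : S.natDegree = 2 * g + 1)
    (κ : ℂ) (hκ0 : κ ≠ 0) (hκ1 : κ ≠ 1)
    (F G : RatFunc ℂ) (hFnc : ∀ c : ℂ, F ≠ RatFunc.C c)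
    (hrel : (algebraMap (Polynomial ℂ) (RatFunc ℂ) S) * G ^ 2
      = F * (F - 1) * (F - RatFunc.C κ)) :
    ∃ p : Polynomial ℂ, p.degree ≤ (g - 1 : ℕ) ∧
      RatFunc.deriv' F / G = algebraMap (Polynomial ℂ) (RatFunc ℂ) p := by
  have hF0 : F ≠ 0 := fun h => hFnc 0 (by rw [h, map_zero])
  have hF1 : F - 1 ≠ 0 := sub_ne_zero.mpr (fun h => hFnc 1 (by rw [h, map_one]))
  have hFκ : F - RatFunc.C κ ≠ 0 := sub_ne_zero.mpr (hFnc κ)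
  have hS0 : S ≠ 0 := hmonic.ne_zero
  have hSalg : algebraMap ℂ[X] (RatFunc ℂ) S ≠ 0 := RatFunc.algebraMap_ne_zero hS0
  have hRHS : F * (F - 1) * (F - RatFunc.C κ) ≠ 0 := mul_ne_zero (mul_ne_zero hF0 hF1) hFκ
  have hG0 : G ≠ 0 := by
    rintro rfl
    apply hRHS
    rw [← hrel]
    simp
  have hG2ne : G ^ 2 ≠ 0 := pow_ne_zero 2 hG0
  by_cases hd0 : RatFunc.deriv' F = 0
  · exact ⟨0, by simp, by rw [hd0, zero_div, map_zero]⟩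
  -- derivative invariance under subtracting constants
  have heq1 : F - 1 = F - RatFunc.C 1 := by rw [map_one]
  have hder1 : RatFunc.deriv' (F - 1) = RatFunc.deriv' F := by
    rw [heq1]; exact deriv'_sub_C F 1
  have hderκ : RatFunc.deriv' (F - RatFunc.C κ) = RatFunc.deriv' F := deriv'_sub_C F κ
  -- the constants relations
  have hpair1 : F - (F - 1) = RatFunc.C 1 := by rw [map_one]; ring
  have hpair2 : F - (F - RatFunc.C κ) = RatFunc.C κ := by ring
  have hpair3 : (F - 1) - (F - RatFunc.C κ) = RatFunc.C (κ - 1) := by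
    rw [map_sub, map_one]; ring
  have hc3 : κ - 1 ≠ 0 := sub_ne_zero.mpr hκ1
  -- finite places
  have hfin : ∀ α : ℂ, 0 ≤ vv α (RatFunc.deriv' F / G) := by
    intro α
    have hrelv := congrArg (vv α) hrel
    rw [vv_mul α hSalg hG2ne, vv_mul α (mul_ne_zero hF0 hF1) hFκ, vv_mul α hF0 hF1,
      vv_algebraMap α hS0] at hrelv
    have hG2v : vv α (G ^ 2) = 2 * vv α G := by rw [sq, vv_mul α hG0 hG0]; ring
    rw [hG2v] at hrelv
    have hsq : rootMultiplicity α S ≤ 1 := by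
      by_contra hcon
      push_neg at hcon
      have hdvd : (X - Polynomial.C α) * (X - Polynomial.C α) ∣ S := by
        rw [← sq]
        exact dvd_trans (pow_dvd_pow _ hcon) (S.pow_rootMultiplicity_dvd α)
      exact (Polynomial.not_isUnit_X_sub_C α) (hsf _ hdvd)
    obtain ⟨q1a, q1b, q1c⟩ := vv_pair α hF0 hF1 one_ne_zero hpair1
    obtain ⟨q2a, q2b, q2c⟩ := vv_pair α hF0 hFκ hκ0 hpair2
    obtain ⟨q3a, q3b, q3c⟩ := vv_pair α hF1 hFκ hc3 hpair3
    have e1 := vv_deriv'_ge α hF0 hd0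
    have e2 : vv α (F - 1) - 1 ≤ vv α (RatFunc.deriv' F) := by
      have := vv_deriv'_ge α hF1 (by rwa [hder1])
      rwa [hder1] at this
    have e3 : vv α (F - RatFunc.C κ) - 1 ≤ vv α (RatFunc.deriv' F) := by
      have := vv_deriv'_ge α hFκ (by rwa [hderκ])
      rwa [hderκ] at this
    have epos : 0 ≤ vv α F → 0 ≤ vv α (RatFunc.deriv' F) :=
      fun h => vv_deriv'_nonneg α hF0 hd0 h
    rw [vv_div α hd0 hG0]
    omega
  have hH0 : RatFunc.deriv' F / G ≠ 0 := div_ne_zero hd0 hG0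
  have hpoly := eq_algebraMap_of_vv_nonneg hH0 hfin
  set p := (RatFunc.deriv' F / G).num with hp
  -- degree bound via intDegree
  have hdegH : (RatFunc.deriv' F / G).intDegree ≤ (g : ℤ) - 1 := by
    have hrelI := congrArg RatFunc.intDegree hrel
    rw [RatFunc.intDegree_mul hSalg hG2ne,
      RatFunc.intDegree_mul (mul_ne_zero hF0 hF1) hFκ,
      RatFunc.intDegree_mul hF0 hF1, RatFunc.intDegree_polynomial, hdeg] at hrelI
    have hG2I : (G ^ 2).intDegree = 2 * G.intDegree := by
      rw [sq, RatFunc.intDegree_mul hG0 hG0]; ring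
    rw [hG2I] at hrelI
    push_cast at hrelI
    obtain ⟨r1a, r1b, r1c⟩ := deg_pair hF0 hF1 one_ne_zero hpair1
    obtain ⟨r2a, r2b, r2c⟩ := deg_pair hF0 hFκ hκ0 hpair2
    obtain ⟨r3a, r3b, r3c⟩ := deg_pair hF1 hFκ hc3 hpair3
    have d1 := intDegree_deriv'_le hF0 hd0
    have d2 : (RatFunc.deriv' F).intDegree ≤ (F - 1).intDegree - 1 := by
      have := intDegree_deriv'_le hF1 (f := F - 1) (by rwa [hder1])
      rwa [hder1] at this
    have d3 : (RatFunc.deriv' F).intDegree ≤ (F - RatFunc.C κ).intDegree - 1 := by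
      have := intDegree_deriv'_le hFκ (f := F - RatFunc.C κ) (by rwa [hderκ])
      rwa [hderκ] at this
    rw [intDegree_div hd0 hG0]
    omega
  have hI : (RatFunc.deriv' F / G).intDegree = (p.natDegree : ℤ) := by
    rw [hpoly, RatFunc.intDegree_polynomial]
  have hnat : p.natDegree ≤ g - 1 := by
    rw [hI] at hdegH
    omega
  exact ⟨p, Polynomial.natDegree_le_iff_degree_le.mp hnat, hpoly⟩
end

section
/- Let κ ∈ ℂ with κ ≠ 0 and κ ≠ 1. There do not exist rational functions f, g ∈ ℂ(x) with f nonconstant such that g² = f·(f−1)·(f−κ). (Equivalently, the elliptic curve v² = u(u−1)(u−κ) admits no nonconstant rational parametrization.) -/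
open Polynomial

private lemma cop_shift {x y : Polynomial ℂ} (h : IsCoprime x y) (z : Polynomial ℂ) :
    IsCoprime (x + y * z) y := by
  obtain ⟨a, b, hab⟩ := h
  exact ⟨a, b - a * z, by linear_combination hab⟩

private lemma cop_shift' {x y : Polynomial ℂ} (h : IsCoprime x y) (z : Polynomial ℂ) :
    IsCoprime x (y + x * z) :=
  ((cop_shift h.symm z)).symm

private lemma coprime_C {u : ℂ} (hu : u ≠ 0) (x : Polynomial ℂ) : IsCoprime x (C u) :=
  ⟨0, C u⁻¹, by rw [zero_mul, zero_add, ← map_mul, inv_mul_cancel₀ hu, map_one]⟩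

private lemma sq_of_coprime {a b c : Polynomial ℂ} (h : IsCoprime a b) (heq : a * b = c ^ 2) :
    ∃ s, a = s ^ 2 := by
  obtain ⟨d, u, hu⟩ := exists_associated_pow_of_mul_eq_pow' h heq
  obtain ⟨r, hr, hru⟩ := Polynomial.isUnit_iff.mp u.isUnit
  obtain ⟨e, he⟩ := IsAlgClosed.exists_pow_nat_eq r (n := 2) (by norm_num)
  refine ⟨C e * d, ?_⟩
  rw [← hu, ← hru, mul_pow, ← map_pow, he, mul_comm]

private lemma descent (N : ℕ) : ∀ (p q : Polynomial ℂ), p.natDegree ≤ N → q.natDegree ≤ N →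
    IsCoprime p q →
    ∀ (a₁ b₁ a₂ b₂ a₃ b₃ a₄ b₄ : ℂ),
    a₁ * b₂ - a₂ * b₁ ≠ 0 → a₁ * b₃ - a₃ * b₁ ≠ 0 → a₁ * b₄ - a₄ * b₁ ≠ 0 →
    a₂ * b₃ - a₃ * b₂ ≠ 0 → a₂ * b₄ - a₄ * b₂ ≠ 0 → a₃ * b₄ - a₄ * b₃ ≠ 0 →
    (∃ s, C a₁ * p + C b₁ * q = s ^ 2) →
    (∃ s, C a₂ * p + C b₂ * q = s ^ 2) →
    (∃ s, C a₃ * p + C b₃ * q = s ^ 2) →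
    (∃ s, C a₄ * p + C b₄ * q = s ^ 2) →
    p.natDegree = 0 ∧ q.natDegree = 0 := by
  induction N using Nat.strong_induction_on with
  | _ N ih =>
  rintro p q hpN hqN hpq a₁ b₁ a₂ b₂ a₃ b₃ a₄ b₄ h12 h13 h14 h23 h24 h34
    ⟨s₁, hs₁⟩ ⟨s₂, hs₂⟩ ⟨s₃, hs₃⟩ ⟨s₄, hs₄⟩
  rcases Nat.eq_zero_or_pos N with hN | hN
  · subst hN; exact ⟨Nat.le_zero.mp hpN, Nat.le_zero.mp hqN⟩
  -- basic identities
  have hP : C (a₁*b₂ - a₂*b₁) * p = C b₂ * s₁^2 - C b₁ * s₂^2 := by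
    rw [← hs₁, ← hs₂]; simp only [map_sub, map_mul]; ring
  have hQ : C (a₁*b₂ - a₂*b₁) * q = C a₁ * s₂^2 - C a₂ * s₁^2 := by
    rw [← hs₁, ← hs₂]; simp only [map_sub, map_mul]; ring
  -- coprimality of s₁ s₂
  obtain ⟨u, v, huv⟩ := hpq
  have hC12 : C ((a₁*b₂-a₂*b₁)⁻¹) * (C a₁ * C b₂ - C a₂ * C b₁) = 1 := by
    rw [← map_mul, ← map_mul, ← map_sub, ← map_mul, inv_mul_cancel₀ h12, map_one]
  have hcop12 : IsCoprime (s₁^2) (s₂^2) := by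
    refine ⟨C ((a₁*b₂-a₂*b₁)⁻¹) * (C b₂ * u - C a₂ * v),
      C ((a₁*b₂-a₂*b₁)⁻¹) * (C a₁ * v - C b₁ * u), ?_⟩
    rw [← hs₁, ← hs₂]
    linear_combination (C ((a₁*b₂-a₂*b₁)⁻¹) * (C a₁ * C b₂ - C a₂ * C b₁)) * huv + hC12
  have hs12 : IsCoprime s₁ s₂ :=
    IsCoprime.of_isCoprime_of_dvd_right
      (IsCoprime.of_isCoprime_of_dvd_left hcop12 (dvd_pow_self s₁ two_ne_zero))
      (dvd_pow_self s₂ two_ne_zero)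
  -- degree bounds
  have hdeg : ∀ (a b : ℂ) (s : Polynomial ℂ), C a * p + C b * q = s^2 → 2 * s.natDegree ≤ N := by
    intro a b s hs
    have h1 : (s^2).natDegree ≤ N := by
      rw [← hs]
      exact (natDegree_add_le _ _).trans (max_le ((natDegree_C_mul_le _ _).trans hpN)
        ((natDegree_C_mul_le _ _).trans hqN))
    simpa [natDegree_pow] using h1
  have hd1 := hdeg _ _ _ hs₁
  have hd2 := hdeg _ _ _ hs₂
  -- nonzero minors
  have hlam3 : a₃*b₂ - b₃*a₂ ≠ 0 := fun h => h23 (by linear_combination -h)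
  have hmu3 : b₃*a₁ - a₃*b₁ ≠ 0 := fun h => h13 (by linear_combination h)
  have hlam4 : a₄*b₂ - b₄*a₂ ≠ 0 := fun h => h24 (by linear_combination -h)
  have hmu4 : b₄*a₁ - a₄*b₁ ≠ 0 := fun h => h14 (by linear_combination h)
  -- square roots of constants
  obtain ⟨ρ, hρ⟩ := IsAlgClosed.exists_pow_nat_eq (-((b₃*a₁ - a₃*b₁)/(a₃*b₂ - b₃*a₂))) (n := 2) (by norm_num)
  obtain ⟨σ, hσ⟩ := IsAlgClosed.exists_pow_nat_eq (-((b₄*a₁ - a₄*b₁)/(a₄*b₂ - b₄*a₂))) (n := 2) (by norm_num)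
  obtain ⟨e₃, he₃⟩ := IsAlgClosed.exists_pow_nat_eq ((a₁*b₂ - a₂*b₁)/(a₃*b₂ - b₃*a₂)) (n := 2) (by norm_num)
  obtain ⟨e₄, he₄⟩ := IsAlgClosed.exists_pow_nat_eq ((a₁*b₂ - a₂*b₁)/(a₄*b₂ - b₄*a₂)) (n := 2) (by norm_num)
  have hρ0 : ρ ≠ 0 := by
    intro h
    have h0 : -((b₃*a₁ - a₃*b₁)/(a₃*b₂ - b₃*a₂)) = 0 := by rw [← hρ, h]; ring
    rw [neg_eq_zero, _root_.div_eq_zero_iff] at h0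
    exact hmu3 (h0.resolve_right hlam3)
  have hσ0 : σ ≠ 0 := by
    intro h
    have h0 : -((b₄*a₁ - a₄*b₁)/(a₄*b₂ - b₄*a₂)) = 0 := by rw [← hσ, h]; ring
    rw [neg_eq_zero, _root_.div_eq_zero_iff] at h0
    exact hmu4 (h0.resolve_right hlam4)
  have hρσ : ρ^2 ≠ σ^2 := by
    rw [hρ, hσ]
    intro h
    apply h34
    have h2 : (b₃*a₁ - a₃*b₁) * (a₄*b₂ - b₄*a₂) = (b₄*a₁ - a₄*b₁) * (a₃*b₂ - b₃*a₂) := by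
      rw [neg_inj, div_eq_div_iff hlam3 hlam4] at h
      linear_combination h
    have h3 : (a₁*b₂ - a₂*b₁) * (a₄*b₃ - a₃*b₄) = 0 := by linear_combination h2
    rcases mul_eq_zero.mp h3 with hc | hc
    · exact absurd hc h12
    · linear_combination -hc
  -- key combination identities
  have h3id : C (a₁*b₂-a₂*b₁) * s₃^2 = C (a₃*b₂ - b₃*a₂) * s₁^2 + C (b₃*a₁ - a₃*b₁) * s₂^2 := by
    rw [← hs₁, ← hs₂, ← hs₃]; simp only [map_sub, map_mul]; ring
  have h4id : C (a₁*b₂-a₂*b₁) * s₄^2 = C (a₄*b₂ - b₄*a₂) * s₁^2 + C (b₄*a₁ - a₄*b₁) * s₂^2 := by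
    rw [← hs₁, ← hs₂, ← hs₄]; simp only [map_sub, map_mul]; ring
  -- factorizations
  have hfac3 : (s₁ - C ρ * s₂) * (s₁ + C ρ * s₂) = (C e₃ * s₃)^2 := by
    apply mul_left_cancel₀ (show (C (a₃*b₂ - b₃*a₂) : Polynomial ℂ) ≠ 0 from
      fun hh => hlam3 (Polynomial.C_eq_zero.mp hh))
    have h1 : (C ρ)^2 * C (a₃*b₂ - b₃*a₂) = - C (b₃*a₁ - a₃*b₁) := by
      rw [← map_pow, hρ, ← map_mul, ← map_neg]; congr 1; field_simp
    have h2 : (C e₃)^2 * C (a₃*b₂ - b₃*a₂) = C (a₁*b₂ - a₂*b₁) := by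
      rw [← map_pow, he₃, ← map_mul]; congr 1; field_simp
      exact div_self (by intro h; apply hlam3; linear_combination h)
    linear_combination -h3id - s₂^2 * h1 - s₃^2 * h2
  have hfac4 : (s₁ - C σ * s₂) * (s₁ + C σ * s₂) = (C e₄ * s₄)^2 := by
    apply mul_left_cancel₀ (show (C (a₄*b₂ - b₄*a₂) : Polynomial ℂ) ≠ 0 from
      fun hh => hlam4 (Polynomial.C_eq_zero.mp hh))
    have h1 : (C σ)^2 * C (a₄*b₂ - b₄*a₂) = - C (b₄*a₁ - a₄*b₁) := by
      rw [← map_pow, hσ, ← map_mul, ← map_neg]; congr 1; field_simp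
    have h2 : (C e₄)^2 * C (a₄*b₂ - b₄*a₂) = C (a₁*b₂ - a₂*b₁) := by
      rw [← map_pow, he₄, ← map_mul]; congr 1; field_simp
      exact div_self (by intro h; apply hlam4; linear_combination h)
    linear_combination -h4id - s₂^2 * h1 - s₄^2 * h2
  -- coprimality of factors
  have hcf : ∀ c : ℂ, c ≠ 0 → IsCoprime (s₁ - C c * s₂) (s₁ + C c * s₂) := by
    intro c hc
    have e1 : IsCoprime (s₁ - C c * s₂) s₂ := by
      have h0 := cop_shift hs12 (-(C c))
      rwa [show s₁ + s₂ * -(C c) = s₁ - C c * s₂ from by ring] at h0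
    have e2 : IsCoprime (s₁ - C c * s₂) (C (c+c) * s₂) :=
      (coprime_C (by intro h; exact hc (by linear_combination h/2)) _).mul_right e1
    have h0 := cop_shift' e2 1
    rwa [show C (c+c) * s₂ + (s₁ - C c * s₂) * 1 = s₁ + C c * s₂ from by
      simp only [map_add]; ring] at h0
  obtain ⟨t₁, ht₁⟩ := sq_of_coprime (hcf ρ hρ0) hfac3
  obtain ⟨t₂, ht₂⟩ := sq_of_coprime (hcf ρ hρ0).symm (by rw [mul_comm]; exact hfac3)
  obtain ⟨t₃, ht₃⟩ := sq_of_coprime (hcf σ hσ0) hfac4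
  obtain ⟨t₄, ht₄⟩ := sq_of_coprime (hcf σ hσ0).symm (by rw [mul_comm]; exact hfac4)
  -- recursive application
  have key := ih (max s₁.natDegree s₂.natDegree) (by omega) s₁ s₂
    (le_max_left _ _) (le_max_right _ _) hs12
    1 (-ρ) 1 ρ 1 (-σ) 1 σ
    (by intro h; exact hρ0 (by linear_combination h/2))
    (by intro h; exact hρσ (by linear_combination (ρ+σ)*h))
    (by intro h; exact hρσ (by linear_combination (ρ-σ)*h))
    (by intro h; exact hρσ (by linear_combination (σ-ρ)*h))
    (by intro h; exact hρσ (by linear_combination -(ρ+σ)*h))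
    (by intro h; exact hσ0 (by linear_combination h/2))
    ⟨t₁, by rw [map_one, one_mul, map_neg]; linear_combination ht₁⟩
    ⟨t₂, by rw [map_one, one_mul]; exact ht₂⟩
    ⟨t₃, by rw [map_one, one_mul, map_neg]; linear_combination ht₃⟩
    ⟨t₄, by rw [map_one, one_mul]; exact ht₄⟩
  obtain ⟨e1, e2⟩ := key
  have hzero : ∀ r : Polynomial ℂ, C (a₁*b₂-a₂*b₁) * r = C b₂ * s₁^2 - C b₁ * s₂^2 ∨
      C (a₁*b₂-a₂*b₁) * r = C a₁ * s₂^2 - C a₂ * s₁^2 → r.natDegree = 0 := by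
    intro r hr
    have hb1 : (s₁^2).natDegree = 0 := by simp [natDegree_pow, e1]
    have hb2 : (s₂^2).natDegree = 0 := by simp [natDegree_pow, e2]
    have hle : (C (a₁*b₂-a₂*b₁) * r).natDegree = 0 := by
      rcases hr with hr | hr <;> rw [hr] <;>
        exact Nat.le_zero.mp ((natDegree_sub_le _ _).trans (max_le
          ((natDegree_C_mul_le _ _).trans_eq (by assumption))
          ((natDegree_C_mul_le _ _).trans_eq (by assumption))))
    rwa [natDegree_C_mul h12] at hle
  exact ⟨hzero p (Or.inl hP), hzero q (Or.inr hQ)⟩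

theorem stmt1 (κ : ℂ) (hκ0 : κ ≠ 0) (hκ1 : κ ≠ 1) :
    ¬ ∃ f g : RatFunc ℂ, (∀ c : ℂ, f ≠ RatFunc.C c) ∧
      g ^ 2 = f * (f - 1) * (f - RatFunc.C κ) := by
  rintro ⟨f, g, hf, heq⟩
  have hq0 : f.denom ≠ 0 := f.denom_ne_zero
  have hm0 : g.denom ≠ 0 := g.denom_ne_zero
  have E : g.num ^ 2 * f.denom ^ 3 =
      f.num * (f.num - f.denom) * (f.num - C κ * f.denom) * g.denom ^ 2 := by
    apply IsFractionRing.injective (Polynomial ℂ) (RatFunc ℂ)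
    have h1 : algebraMap (Polynomial ℂ) (RatFunc ℂ) f.denom ≠ 0 := RatFunc.algebraMap_ne_zero hq0
    have h2 : algebraMap (Polynomial ℂ) (RatFunc ℂ) g.denom ≠ 0 := RatFunc.algebraMap_ne_zero hm0
    simp only [map_mul, map_pow, map_sub]
    have hgn : algebraMap (Polynomial ℂ) (RatFunc ℂ) g.num = g * algebraMap _ _ g.denom :=
      (div_eq_iff h2).mp (RatFunc.num_div_denom g)
    have hfn : algebraMap (Polynomial ℂ) (RatFunc ℂ) f.num = f * algebraMap _ _ f.denom :=
      (div_eq_iff h1).mp (RatFunc.num_div_denom f)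
    rw [RatFunc.algebraMap_C, hgn, hfn]
    linear_combination (algebraMap (Polynomial ℂ) (RatFunc ℂ) g.denom) ^ 2 *
      (algebraMap (Polynomial ℂ) (RatFunc ℂ) f.denom) ^ 3 * heq
  have hcpq : IsCoprime f.num f.denom := f.isCoprime_num_denom
  have hcnm : IsCoprime g.num g.denom := g.isCoprime_num_denom
  have c1 : IsCoprime (f.num - f.denom) f.denom := by
    have h0 := cop_shift hcpq (-1)
    rwa [show f.num + f.denom * (-1) = f.num - f.denom from by ring] at h0
  have c2 : IsCoprime (f.num - C κ * f.denom) f.denom := by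
    have h0 := cop_shift hcpq (-(C κ))
    rwa [show f.num + f.denom * (-(C κ)) = f.num - C κ * f.denom from by ring] at h0
  have cP : IsCoprime (f.num * (f.num - f.denom) * (f.num - C κ * f.denom)) (f.denom ^ 3) :=
    ((hcpq.mul_left c1).mul_left c2).pow_right
  have cM : IsCoprime (g.denom ^ 2) (g.num ^ 2) := hcnm.symm.pow
  have dv1 : g.denom ^ 2 ∣ f.denom ^ 3 :=
    cM.dvd_of_dvd_mul_left
      ⟨f.num * (f.num - f.denom) * (f.num - C κ * f.denom), by rw [E]; ring⟩
  have dv2 : f.denom ^ 3 ∣ g.denom ^ 2 :=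
    cP.symm.dvd_of_dvd_mul_left ⟨g.num ^ 2, by linear_combination -E⟩
  have hass : f.denom ^ 3 = g.denom ^ 2 :=
    Polynomial.eq_of_monic_of_associated (f.monic_denom.pow _) (g.monic_denom.pow _)
      (associated_of_dvd_dvd dv2 dv1)
  have En : g.num ^ 2 = f.num * (f.num - f.denom) * (f.num - C κ * f.denom) := by
    have hq3 : f.denom ^ 3 ≠ 0 := pow_ne_zero _ hq0
    apply mul_right_cancel₀ hq3
    calc g.num ^ 2 * f.denom ^ 3
        = f.num * (f.num - f.denom) * (f.num - C κ * f.denom) * g.denom ^ 2 := E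
      _ = f.num * (f.num - f.denom) * (f.num - C κ * f.denom) * f.denom ^ 3 := by rw [hass]
  have dvq : f.denom ∣ g.denom := by
    have h2 : f.denom ^ 2 ∣ g.denom ^ 2 := ⟨f.denom, by rw [← hass]; ring⟩
    exact (IsIntegrallyClosed.pow_dvd_pow_iff two_ne_zero).mp h2
  obtain ⟨t, ht⟩ := dvq
  have hqt : f.denom = t ^ 2 := by
    apply mul_left_cancel₀ (pow_ne_zero 2 hq0)
    calc f.denom ^ 2 * f.denom = f.denom ^ 3 := by ring
      _ = g.denom ^ 2 := hass
      _ = f.denom ^ 2 * t ^ 2 := by rw [ht]; ring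
  have cp1 : IsCoprime f.num (f.num - f.denom) := by
    have h0 := cop_shift' hcpq.neg_right 1
    rwa [show -f.denom + f.num * 1 = f.num - f.denom from by ring] at h0
  have cp2 : IsCoprime f.num (f.num - C κ * f.denom) := by
    have hck : IsCoprime f.num (C κ * f.denom) := ((coprime_C hκ0 f.num).mul_right hcpq)
    have h0 := cop_shift' hck.neg_right 1
    rwa [show -(C κ * f.denom) + f.num * 1 = f.num - C κ * f.denom from by ring] at h0
  have cp3 : IsCoprime (f.num - f.denom) (f.num - C κ * f.denom) := by
    have hck : IsCoprime (f.num - f.denom) (C (κ - 1) * f.denom) :=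
      (coprime_C (sub_ne_zero.mpr hκ1) _).mul_right c1
    have h0 := cop_shift' hck.neg_right 1
    rwa [show -(C (κ-1) * f.denom) + (f.num - f.denom) * 1 = f.num - C κ * f.denom from by
      simp only [map_sub, map_one]; ring] at h0
  obtain ⟨A, hA⟩ := sq_of_coprime (cp1.mul_right cp2)
    (show f.num * ((f.num - f.denom) * (f.num - C κ * f.denom)) = g.num ^ 2 from by
      linear_combination -En)
  obtain ⟨B, hB⟩ := sq_of_coprime (cp1.symm.mul_right cp3)
    (show (f.num - f.denom) * (f.num * (f.num - C κ * f.denom)) = g.num ^ 2 from by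
      linear_combination -En)
  obtain ⟨D, hD⟩ := sq_of_coprime (cp2.symm.mul_right cp3.symm)
    (show (f.num - C κ * f.denom) * (f.num * (f.num - f.denom)) = g.num ^ 2 from by
      linear_combination -En)
  have hdeg := descent (max f.num.natDegree f.denom.natDegree) f.num f.denom
    (le_max_left _ _) (le_max_right _ _) hcpq
    1 0 0 1 1 (-1) 1 (-κ)
    (by norm_num) (by norm_num) (by simpa using hκ0) (by norm_num) (by norm_num)
    (by intro h; exact hκ1 (by linear_combination -h))
    ⟨A, by simpa using hA⟩
    ⟨t, by simpa using hqt⟩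
    ⟨B, by simp only [map_one, one_mul, map_neg]; linear_combination hB⟩
    ⟨D, by simp only [map_one, one_mul, map_neg]; linear_combination hD⟩
  obtain ⟨hdp, hdq⟩ := hdeg
  have hq1 : f.denom = 1 := (Polynomial.Monic.natDegree_eq_zero f.monic_denom).mp hdq
  obtain ⟨c, hc⟩ := Polynomial.natDegree_eq_zero.mp hdp
  apply hf c
  rw [← RatFunc.num_div_denom f, hq1, ← hc, map_one, div_one, RatFunc.algebraMap_C]
end

section
/- Let S ∈ ℂ[x] be a monic squarefree polynomial of odd degree 2g+1 with g ≥ 1, let κ ∈ ℂ with κ ≠ 0, κ ≠ 1, let U, V ∈ ℂ[x] be coprime with U/V nonconstant, and suppose there exists G ∈ ℂ(x) with S·G² = (U/V)·(U/V − 1)·(U/V − κ). Then there exist a partition of the set of roots of S into four (possibly empty) subsets R₁, R₂, R₃, R₄ and polynomials A, B, C, D ∈ ℂ[x] such that U = A²·∏_{α∈R₁}(x−α), V = B²·∏_{α∈R₂}(x−α), U−V = C²·∏_{α∈R₃}(x−α), and U−κV = D²·∏_{α∈R₄}(x−α). -/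
open Polynomial

noncomputable def oddPart (p : Polynomial ℂ) : Finset ℂ :=
  p.roots.toFinset.filter (fun α => Odd (p.roots.count α))

lemma mem_oddPart {p : Polynomial ℂ} (hp : p ≠ 0) {α : ℂ} :
    α ∈ oddPart p ↔ Odd (rootMultiplicity α p) := by
  simp only [oddPart, Finset.mem_filter, Multiset.mem_toFinset, count_roots]
  constructor
  · rintro ⟨-, h⟩; exact h
  · intro h
    refine ⟨?_, h⟩
    rw [mem_roots hp, ← rootMultiplicity_pos hp]
    exact h.pos

lemma sq_decomp (p : Polynomial ℂ) (hp : p ≠ 0) :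
    ∃ A : Polynomial ℂ, p = A ^ 2 * ∏ α ∈ oddPart p, (X - C α) := by
  classical
  obtain ⟨d, hd⟩ := IsAlgClosed.exists_pow_nat_eq p.leadingCoeff (n := 2) two_pos
  refine ⟨C d * ∏ α ∈ p.roots.toFinset, (X - C α) ^ (p.roots.count α / 2), ?_⟩
  conv_lhs => rw [(IsAlgClosed.splits p).eq_prod_roots]
  rw [Finset.prod_multiset_map_count]
  rw [mul_pow, ← map_pow, hd, ← Finset.prod_pow, oddPart, Finset.prod_filter,
    mul_assoc, ← Finset.prod_mul_distrib]
  congr 1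
  refine Finset.prod_congr rfl fun α _ => ?_
  rw [← pow_mul]
  rcases Nat.even_or_odd (p.roots.count α) with he | ho
  · rw [if_neg (by simpa [Nat.not_odd_iff_even] using he), mul_one]
    congr 1
    obtain ⟨k, hk⟩ := he
    omega
  · rw [if_pos ho, ← pow_succ]
    congr 1
    have := Nat.odd_iff.mp ho
    omega

lemma noCommonRoot {p q : Polynomial ℂ} (h : IsCoprime p q) (α : ℂ) :
    rootMultiplicity α p = 0 ∨ rootMultiplicity α q = 0 := by
  by_contra hc
  push_neg at hc
  obtain ⟨h1, h2⟩ := hc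
  have hp := (rootMultiplicity_pos' (p := p) (x := α)).mp (Nat.pos_of_ne_zero h1)
  have hq := (rootMultiplicity_pos' (p := q) (x := α)).mp (Nat.pos_of_ne_zero h2)
  obtain ⟨a, b, hab⟩ := h
  have := congrArg (eval α) hab
  rw [eval_add, eval_mul, eval_mul, eval_one, show eval α p = 0 from hp.2,
    show eval α q = 0 from hq.2] at this
  simp at this

theorem stmt6 (g : ℕ) (hg : 1 ≤ g) (S : Polynomial ℂ) (hmonic : S.Monic)
    (hsf : Squarefree S) (hdeg : S.natDegree = 2 * g + 1)
    (κ : ℂ) (hκ0 : κ ≠ 0) (hκ1 : κ ≠ 1)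
    (U V : Polynomial ℂ) (hUV : IsCoprime U V)
    (hFnc : ∀ c : ℂ,
      (algebraMap (Polynomial ℂ) (RatFunc ℂ) U) / (algebraMap (Polynomial ℂ) (RatFunc ℂ) V)
        ≠ RatFunc.C c)
    (hrel : ∃ G : RatFunc ℂ,
      (algebraMap (Polynomial ℂ) (RatFunc ℂ) S) * G ^ 2 =
        ((algebraMap (Polynomial ℂ) (RatFunc ℂ) U) / (algebraMap (Polynomial ℂ) (RatFunc ℂ) V)) *
        ((algebraMap (Polynomial ℂ) (RatFunc ℂ) U) / (algebraMap (Polynomial ℂ) (RatFunc ℂ) V) - 1) *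
        ((algebraMap (Polynomial ℂ) (RatFunc ℂ) U) / (algebraMap (Polynomial ℂ) (RatFunc ℂ) V)
          - RatFunc.C κ)) :
    ∃ R₁ R₂ R₃ R₄ : Finset ℂ,
      (R₁ ∪ R₂ ∪ R₃ ∪ R₄ = S.roots.toFinset) ∧
      Disjoint R₁ R₂ ∧ Disjoint R₁ R₃ ∧ Disjoint R₁ R₄ ∧
      Disjoint R₂ R₃ ∧ Disjoint R₂ R₄ ∧ Disjoint R₃ R₄ ∧
      ∃ A B C' D : Polynomial ℂ,
        U = A ^ 2 * ∏ α ∈ R₁, (X - C α) ∧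
        V = B ^ 2 * ∏ α ∈ R₂, (X - C α) ∧
        U - V = C' ^ 2 * ∏ α ∈ R₃, (X - C α) ∧
        U - C κ * V = D ^ 2 * ∏ α ∈ R₄, (X - C α) := by
  classical
  have hS0 : S ≠ 0 := hmonic.ne_zero
  set f := algebraMap (Polynomial ℂ) (RatFunc ℂ) with hf
  -- nonvanishing of the four polynomials
  have hV0 : V ≠ 0 := by
    intro h
    exact hFnc 0 (by rw [h, map_zero, div_zero, map_zero])
  have hVne : f V ≠ 0 := RatFunc.algebraMap_ne_zero hV0
  have hU0 : U ≠ 0 := by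
    intro h
    exact hFnc 0 (by rw [h, map_zero, zero_div, map_zero])
  have hP30 : U - V ≠ 0 := by
    intro h
    exact hFnc 1 (by rw [sub_eq_zero.mp h, div_self hVne, map_one])
  have hP40 : U - C κ * V ≠ 0 := by
    intro h
    refine hFnc κ ?_
    rw [sub_eq_zero.mp h, map_mul, mul_div_assoc, div_self hVne, mul_one,
      RatFunc.algebraMap_C]
  -- pairwise coprimality
  obtain ⟨p, q, hpq⟩ := id hUV
  have hcκ : Polynomial.C κ⁻¹ * Polynomial.C κ = (1 : Polynomial ℂ) := by
    rw [← map_mul, inv_mul_cancel₀ hκ0, map_one]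
  have hcκ1 : Polynomial.C ((κ - 1)⁻¹) * (Polynomial.C κ - 1) = (1 : Polynomial ℂ) := by
    rw [show (Polynomial.C κ - 1 : Polynomial ℂ) = Polynomial.C (κ - 1) by
      rw [map_sub, map_one], ← map_mul, inv_mul_cancel₀ (sub_ne_zero.mpr hκ1), map_one]
  have h13 : IsCoprime U (U - V) := ⟨p + q, -q, by linear_combination hpq⟩
  have h14 : IsCoprime U (U - C κ * V) :=
    ⟨p + Polynomial.C κ⁻¹ * q, -(Polynomial.C κ⁻¹ * q), by
      linear_combination hpq + q * V * hcκ⟩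
  have h23 : IsCoprime V (U - V) := ⟨p + q, p, by linear_combination hpq⟩
  have h24 : IsCoprime V (U - C κ * V) := ⟨C κ * p + q, p, by linear_combination hpq⟩
  have h34 : IsCoprime (U - V) (U - C κ * V) :=
    ⟨Polynomial.C ((κ - 1)⁻¹) * (Polynomial.C κ * p + q),
     Polynomial.C ((κ - 1)⁻¹) * (-p - q), by
      linear_combination (Polynomial.C ((κ - 1)⁻¹) * (Polynomial.C κ - 1)) * hpq + hcκ1⟩
  -- obtain the polynomial T with T² = S·U·V·(U-V)·(U-κV)
  obtain ⟨G, hG⟩ := hrel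
  have key : f S * (G * f V ^ 2) ^ 2 = f (U * (V * ((U - V) * (U - C κ * V)))) := by
    have h2 : f S * (G * f V ^ 2) ^ 2 = f S * G ^ 2 * (f V ^ 2) ^ 2 := by ring
    rw [h2, hG, map_mul, map_mul, map_mul, map_sub, map_sub, map_mul, RatFunc.algebraMap_C]
    field_simp
  have hx : (f S * (G * f V ^ 2)) ^ 2
      = f (S * (U * (V * ((U - V) * (U - C κ * V))))) := by
    rw [map_mul, ← key]
    ring
  have hint : IsIntegral (Polynomial ℂ) (f S * (G * f V ^ 2)) := by
    refine ⟨X ^ 2 - Polynomial.C (S * (U * (V * ((U - V) * (U - C κ * V))))),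
      monic_X_pow_sub_C _ two_ne_zero, ?_⟩
    simp only [eval₂_sub, eval₂_X_pow, eval₂_C]
    rw [← hf, hx, sub_self]
  obtain ⟨T, hT⟩ := IsIntegrallyClosed.isIntegral_iff.mp hint
  have hT2 : T ^ 2 = S * (U * (V * ((U - V) * (U - C κ * V)))) := by
    apply RatFunc.algebraMap_injective ℂ
    rw [← hf, map_pow, hT, hx]
  have n34 := mul_ne_zero hP30 hP40
  have n234 := mul_ne_zero hV0 n34
  have n1234 := mul_ne_zero hU0 n234
  have nall := mul_ne_zero hS0 n1234
  have hT0 : T ≠ 0 := by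
    intro h
    rw [h] at hT2
    exact nall (by simpa using hT2.symm)
  -- the root multiplicity equation
  have hkey : ∀ α : ℂ,
      rootMultiplicity α S + (rootMultiplicity α U + (rootMultiplicity α V +
        (rootMultiplicity α (U - V) + rootMultiplicity α (U - C κ * V))))
      = 2 * rootMultiplicity α T := by
    intro α
    have h1 : rootMultiplicity α (T ^ 2) = 2 * rootMultiplicity α T := by
      rw [sq, rootMultiplicity_mul (mul_ne_zero hT0 hT0), two_mul]
    rw [← h1, hT2, rootMultiplicity_mul nall, rootMultiplicity_mul n1234,
      rootMultiplicity_mul n234, rootMultiplicity_mul n34]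
  have hSle : ∀ α : ℂ, rootMultiplicity α S ≤ 1 := by
    intro α
    by_contra h
    push_neg at h
    have hdvd : (X - C α) * (X - C α) ∣ S := by
      calc (X - C α) * (X - C α) = (X - C α) ^ 2 := (sq _).symm
        _ ∣ (X - C α) ^ rootMultiplicity α S := pow_dvd_pow _ h
        _ ∣ S := pow_rootMultiplicity_dvd S α
    exact not_isUnit_X_sub_C α (hsf _ hdvd)
  refine ⟨oddPart U, oddPart V, oddPart (U - V), oddPart (U - C κ * V),
    ?_, ?_, ?_, ?_, ?_, ?_, ?_, ?_⟩
  · ext α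
    have hk := hkey α
    have hle := hSle α
    have d12 := noCommonRoot hUV α
    have d13 := noCommonRoot h13 α
    have d14 := noCommonRoot h14 α
    have d23 := noCommonRoot h23 α
    have d24 := noCommonRoot h24 α
    have d34 := noCommonRoot h34 α
    simp only [Finset.mem_union, mem_oddPart hU0, mem_oddPart hV0, mem_oddPart hP30,
      mem_oddPart hP40, Multiset.mem_toFinset, mem_roots hS0,
      ← rootMultiplicity_pos hS0, Nat.odd_iff]
    omega
  · rw [Finset.disjoint_left]
    intro α h1 h2
    rw [mem_oddPart hU0, Nat.odd_iff] at h1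
    rw [mem_oddPart hV0, Nat.odd_iff] at h2
    have := noCommonRoot hUV α
    omega
  · rw [Finset.disjoint_left]
    intro α h1 h2
    rw [mem_oddPart hU0, Nat.odd_iff] at h1
    rw [mem_oddPart hP30, Nat.odd_iff] at h2
    have := noCommonRoot h13 α
    omega
  · rw [Finset.disjoint_left]
    intro α h1 h2
    rw [mem_oddPart hU0, Nat.odd_iff] at h1
    rw [mem_oddPart hP40, Nat.odd_iff] at h2
    have := noCommonRoot h14 α
    omega
  · rw [Finset.disjoint_left]
    intro α h1 h2
    rw [mem_oddPart hV0, Nat.odd_iff] at h1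
    rw [mem_oddPart hP30, Nat.odd_iff] at h2
    have := noCommonRoot h23 α
    omega
  · rw [Finset.disjoint_left]
    intro α h1 h2
    rw [mem_oddPart hV0, Nat.odd_iff] at h1
    rw [mem_oddPart hP40, Nat.odd_iff] at h2
    have := noCommonRoot h24 α
    omega
  · rw [Finset.disjoint_left]
    intro α h1 h2
    rw [mem_oddPart hP30, Nat.odd_iff] at h1
    rw [mem_oddPart hP40, Nat.odd_iff] at h2
    have := noCommonRoot h34 α
    omega
  · obtain ⟨A, hA⟩ := sq_decomp U hU0
    obtain ⟨B, hB⟩ := sq_decomp V hV0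
    obtain ⟨C', hC'⟩ := sq_decomp (U - V) hP30
    obtain ⟨D, hD⟩ := sq_decomp (U - C κ * V) hP40
    exact ⟨A, B, C', D, hA, hB, hC', hD⟩
end

section
/- Let S ∈ ℂ[x] be a monic squarefree polynomial of odd degree 2g+1 with g ≥ 1, let κ ∈ ℂ with κ ≠ 0, κ ≠ 1, let R₁, R₂, R₃, R₄ be a partition of the set of roots of S into four (possibly empty) subsets, and let A, B, C, D ∈ ℂ[x] and coprime U, V ∈ ℂ[x] satisfy U = A²·∏_{α∈R₁}(x−α), V = B²·∏_{α∈R₂}(x−α), U−V = C²·∏_{α∈R₃}(x−α), U−κV = D²·∏_{α∈R₄}(x−α), with F := U/V nonconstant. Then G := A·B·C·D/V² satisfies S·G² = F·(F−1)·(F−κ), i.e. (κ, F, G) is an elliptic morphism for S. -/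
open Polynomial

theorem stmt7 (g : ℕ) (hg : 1 ≤ g) (S : Polynomial ℂ) (hmonic : S.Monic)
    (hsf : Squarefree S) (hdeg : S.natDegree = 2 * g + 1)
    (κ : ℂ) (hκ0 : κ ≠ 0) (hκ1 : κ ≠ 1)
    (R₁ R₂ R₃ R₄ : Finset ℂ)
    (hcover : R₁ ∪ R₂ ∪ R₃ ∪ R₄ = S.roots.toFinset)
    (h12 : Disjoint R₁ R₂) (h13 : Disjoint R₁ R₃) (h14 : Disjoint R₁ R₄)
    (h23 : Disjoint R₂ R₃) (h24 : Disjoint R₂ R₄) (h34 : Disjoint R₃ R₄)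
    (A B C' D U V : Polynomial ℂ) (hUV : IsCoprime U V)
    (hU : U = A ^ 2 * ∏ α ∈ R₁, (X - C α))
    (hV : V = B ^ 2 * ∏ α ∈ R₂, (X - C α))
    (hUmV : U - V = C' ^ 2 * ∏ α ∈ R₃, (X - C α))
    (hUmκV : U - C κ * V = D ^ 2 * ∏ α ∈ R₄, (X - C α))
    (F : RatFunc ℂ)
    (hF : F = (algebraMap (Polynomial ℂ) (RatFunc ℂ) U)
        / (algebraMap (Polynomial ℂ) (RatFunc ℂ) V))
    (hFnc : ∀ c : ℂ, F ≠ RatFunc.C c)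
    (G : RatFunc ℂ)
    (hG : G = (algebraMap (Polynomial ℂ) (RatFunc ℂ) (A * B * C' * D))
        / (algebraMap (Polynomial ℂ) (RatFunc ℂ) (V ^ 2))) :
    (algebraMap (Polynomial ℂ) (RatFunc ℂ) S) * G ^ 2
      = F * (F - 1) * (F - RatFunc.C κ) := by
  -- S is the product of (X - α) over its distinct roots
  have hSprod : S = ∏ α ∈ S.roots.toFinset, (X - C α) := by
    have hn : S.roots.Nodup := nodup_roots (PerfectField.separable_iff_squarefree.mpr hsf)
    conv_lhs => rw [(IsAlgClosed.splits S).eq_prod_roots_of_monic hmonic]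
    rw [Finset.prod_eq_multiset_prod]
    simp [Multiset.toFinset_val, Multiset.dedup_eq_self.mpr hn]
  -- key polynomial identity
  have key : U * (U - V) * (U - C κ * V) * V = S * (A * B * C' * D) ^ 2 := by
    rw [hUmV, hUmκV, hU, hV, hSprod, ← hcover,
      Finset.prod_union (by
        rw [Finset.disjoint_union_left, Finset.disjoint_union_left]
        exact ⟨⟨h14, h24⟩, h34⟩),
      Finset.prod_union (by rw [Finset.disjoint_union_left]; exact ⟨h13, h23⟩),
      Finset.prod_union h12]
    ring
  -- V ≠ 0
  have hV0 : V ≠ 0 := by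
    rintro rfl
    exact hFnc 0 (by simp [hF])
  have hVφ : algebraMap (Polynomial ℂ) (RatFunc ℂ) V ≠ 0 := by
    simpa using hV0
  rw [hF, hG]
  have hCκ : RatFunc.C κ = algebraMap (Polynomial ℂ) (RatFunc ℂ) (C κ) := by
    simp [RatFunc.algebraMap_C]
  have keyφ := congrArg (algebraMap (Polynomial ℂ) (RatFunc ℂ)) key
  simp only [map_mul, map_sub, map_pow] at keyφ
  field_simp
  rw [hCκ]
  simp only [map_mul, map_pow]
  linear_combination (-(((algebraMap (Polynomial ℂ) (RatFunc ℂ)) V)^3)) * keyφ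
end

section
/- Let S = 4x⁵ − 10x⁴ − 4x³ + 9x² + 6x + 1 ∈ ℚ[x]. Then the following two identities hold in the field ℚ(x): with F₁ = x²/(2x+1), one has S·x²/(2(2x+1)⁴) = F₁·(F₁−1)·(F₁−1/2); and with F₂ = (x+1)²/(4x+2), one has S·(x+1)²/(16(2x+1)⁴) = F₂·(F₂−1)·(F₂−3/4). In particular, (1/2, F₁, G₁) with G₁² = x²/(2(2x+1)⁴) and (3/4, F₂, G₂) with G₂ = (x+1)/(4(2x+1)²) define two elliptic morphisms for the genus-2 hyperelliptic curve y² = S(x). -/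
theorem stmt17 (x S F₁ F₂ G₂ : RatFunc ℚ) (hx : x = RatFunc.X)
    (hS : S = 4 * x ^ 5 - 10 * x ^ 4 - 4 * x ^ 3 + 9 * x ^ 2 + 6 * x + 1)
    (hF₁ : F₁ = x ^ 2 / (2 * x + 1))
    (hF₂ : F₂ = (x + 1) ^ 2 / (4 * x + 2))
    (hG₂ : G₂ = (x + 1) / (4 * (2 * x + 1) ^ 2)) :
    S * x ^ 2 / (2 * (2 * x + 1) ^ 4) = F₁ * (F₁ - 1) * (F₁ - 1 / 2) ∧
    S * (x + 1) ^ 2 / (16 * (2 * x + 1) ^ 4) = F₂ * (F₂ - 1) * (F₂ - 3 / 4) ∧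
    S * G₂ ^ 2 = F₂ * (F₂ - 1) * (F₂ - 3 / 4) ∧
    (∀ c : ℚ, F₁ ≠ RatFunc.C c) ∧ (∀ c : ℚ, F₂ ≠ RatFunc.C c) := by
  have halg : Function.Injective (algebraMap (Polynomial ℚ) (RatFunc ℚ)) :=
    RatFunc.algebraMap_injective ℚ
  haveI : CharZero (RatFunc ℚ) := charZero_of_injective_algebraMap halg
  have e1 : (2 * x + 1 : RatFunc ℚ)
      = algebraMap (Polynomial ℚ) (RatFunc ℚ) (2 * Polynomial.X + 1) := by
    simp only [map_add, map_mul, map_one, map_ofNat, RatFunc.algebraMap_X, hx]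
  have e2 : (4 * x + 2 : RatFunc ℚ)
      = algebraMap (Polynomial ℚ) (RatFunc ℚ) (4 * Polynomial.X + 2) := by
    simp only [map_add, map_mul, map_one, map_ofNat, RatFunc.algebraMap_X, hx]
  have h1 : (2 * x + 1 : RatFunc ℚ) ≠ 0 := by
    rw [e1]
    intro h
    have hz := halg (h.trans (map_zero _).symm)
    have := congrArg (fun p => Polynomial.coeff p 1) hz
    simp [Polynomial.coeff_one, Polynomial.coeff_X] at this
  have h2 : (4 * x + 2 : RatFunc ℚ) ≠ 0 := by
    rw [e2]
    intro h
    have hz := halg (h.trans (map_zero _).symm)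
    have := congrArg (fun p => Polynomial.coeff p 1) hz
    simp [Polynomial.coeff_one, Polynomial.coeff_X] at this
  refine ⟨?_, ?_, ?_, ?_, ?_⟩
  · rw [hS, hF₁]; field_simp [show x * 2 + 1 ≠ 0 by rwa [mul_comm]]; ring
  · rw [hS, hF₂]; field_simp [show x * 2 + 1 ≠ 0 by rwa [mul_comm], h2]; ring
  · rw [hS, hF₂, hG₂]; field_simp [show x * 2 + 1 ≠ 0 by rwa [mul_comm], h2]; ring
  · intro c hc
    rw [hF₁, div_eq_iff h1] at hc
    have hp : algebraMap (Polynomial ℚ) (RatFunc ℚ) (Polynomial.X ^ 2)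
        = algebraMap (Polynomial ℚ) (RatFunc ℚ) (Polynomial.C c * (2 * Polynomial.X + 1)) := by
      simp only [map_pow, map_mul, RatFunc.algebraMap_X, RatFunc.algebraMap_C, ← hx, ← e1]
      exact hc
    have h2' := congrArg (fun p => Polynomial.coeff p 2) (halg hp)
    simp [Polynomial.coeff_X, Polynomial.coeff_one, Polynomial.coeff_X_pow] at h2'
  · intro c hc
    rw [hF₂, div_eq_iff h2] at hc
    have hp : algebraMap (Polynomial ℚ) (RatFunc ℚ) ((Polynomial.X + 1) ^ 2)
        = algebraMap (Polynomial ℚ) (RatFunc ℚ) (Polynomial.C c * (4 * Polynomial.X + 2)) := by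
      simp only [map_pow, map_mul, map_add, map_one, RatFunc.algebraMap_X,
        RatFunc.algebraMap_C, ← hx, ← e2]
      exact hc
    have h2' := congrArg (fun p => Polynomial.coeff p 2) (halg hp)
    simp [Polynomial.coeff_X, Polynomial.coeff_one, Polynomial.coeff_X_pow, add_sq] at h2'
end
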